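/- Let α be a unit-speed timelike curve in R³₁, β with β' = B, and X = x₁T + x₃B in the rectifying plane with x₁k₁ - x₃k₂ ≠ 0. Then P̃_X = x₁/(x₁k₁ - x₃k₂), which vanishes if and only if x₁ = 0. -/

import Mathlib

noncomputable def mink (u v : Fin 3 → ℝ) : ℝ := u 0 * v 0 + u 1 * v 1 - u 2 * v 2

noncomputable def det3 (u v w : Fin 3 → ℝ) : ℝ :=
  Matrix.det !![u 0, u 1, u 2; v 0, v 1, v 2; w 0, w 1, w 2]

theorem stmt17
    (α T N B : ℝ → Fin 3 → ℝ) (k₁ k₂ : ℝ → ℝ)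
    (hα : ∀ s, HasDerivAt α (T s) s)
    (hTT : ∀ s, mink (T s) (T s) = -1)
    (hNN : ∀ s, mink (N s) (N s) = 1)
    (hBB : ∀ s, mink (B s) (B s) = 1)
    (hTN : ∀ s, mink (T s) (N s) = 0)
    (hTB : ∀ s, mink (T s) (B s) = 0)
    (hNB : ∀ s, mink (N s) (B s) = 0)
    (hdet : ∀ s, det3 (T s) (N s) (B s) = 1)
    (hT : ∀ s, HasDerivAt T (k₁ s • N s) s)
    (hN : ∀ s, HasDerivAt N (k₁ s • T s + k₂ s • B s) s)
    (hB : ∀ s, HasDerivAt B ((-(k₂ s)) • N s) s)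
    (β : ℝ → Fin 3 → ℝ) (hβ : ∀ s, HasDerivAt β (B s) s)
    (x₁ x₃ : ℝ) (hnz : ∀ s, x₁ * k₁ s - x₃ * k₂ s ≠ 0)
    (X : ℝ → Fin 3 → ℝ) (hX : ∀ s, X s = x₁ • T s + x₃ • B s) :
    ∀ s, det3 (deriv β s) (X s) (deriv X s) / mink (deriv X s) (deriv X s) = x₁ / (x₁ * k₁ s - x₃ * k₂ s) ∧
      (det3 (deriv β s) (X s) (deriv X s) / mink (deriv X s) (deriv X s) = 0 ↔ x₁ = 0) := by
  intro s
  set c : ℝ := x₁ * k₁ s - x₃ * k₂ s with hc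
  have hcne : c ≠ 0 := hnz s
  have hXfun : X = fun t => x₁ • T t + x₃ • B t := funext hX
  have hXd : HasDerivAt X (c • N s) s := by
    rw [hXfun]
    have h := ((hT s).const_smul x₁).add ((hB s).const_smul x₃)
    convert h using 1
    any_goals rfl
    rw [hc]
    module
  have hβd : deriv β s = B s := (hβ s).deriv
  have hXderiv : deriv X s = c • N s := hXd.deriv
  have hnum : det3 (B s) (x₁ • T s + x₃ • B s) (c • N s) = x₁ * c := by
    have h := hdet s
    simp [det3, Matrix.det_fin_three, Pi.add_apply, Pi.smul_apply] at h ⊢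
    linear_combination x₁ * c * h
  have hden : mink (c • N s) (c • N s) = c ^ 2 := by
    have h := hNN s
    simp only [mink, Pi.smul_apply, smul_eq_mul] at h ⊢
    linear_combination c ^ 2 * h
  rw [hβd, hXderiv, hX s, hnum, hden]
  have hval : x₁ * c / c ^ 2 = x₁ / c := by
    field_simp
  refine ⟨hval, ?_⟩
  rw [hval, div_eq_zero_iff]
  constructor
  · rintro (h | h)
    · exact h
    · exact absurd h hcne
  · exact fun h => Or.inl h
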